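/- For a nonnegative random variable L independent of an integrable random function f(ℓ) on [0,∞) with P(L ≥ ℓ) > 0 for all ℓ, we have E[∫_0^{L} f(ℓ)/P(L ≥ ℓ) dℓ] = ∫_0^{∞} E[f(ℓ)] dℓ, provided ∫_0^∞ E[|f(ℓ)|] dℓ < ∞. -/

import Mathlib

open MeasureTheory ProbabilityTheory Real ENNReal

/-- Key exchange-of-expectation identity underlying the unbiasedness of CLMC:
for a nonnegative random variable `L` independent of the process `f` with
`P(L ≥ ℓ) > 0` for all `ℓ ≥ 0` and `∫_0^∞ E[|f(ℓ)|] dℓ < ∞`, we have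
`E[∫_0^L f(ℓ)/P(L ≥ ℓ) dℓ] = ∫_0^∞ E[f(ℓ)] dℓ`. -/
theorem clmc_exchange_identity {Ω : Type*} [MeasurableSpace Ω] (μ : Measure Ω)
    [IsProbabilityMeasure μ] (f : ℝ → Ω → ℝ)
    (hjm : Measurable (Function.uncurry f))
    (L : Ω → ℝ) (hLm : Measurable L) (hL0 : ∀ ω, 0 ≤ L ω)
    (hpos : ∀ ℓ : ℝ, 0 ≤ ℓ → 0 < μ {ω | ℓ ≤ L ω})
    (hindep : IndepFun (fun ω => fun ℓ => f ℓ ω) L μ)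
    (hint : (∫⁻ ℓ in Set.Ioi (0 : ℝ), ∫⁻ ω, ‖f ℓ ω‖₊ ∂μ) < ⊤) :
    ∫ ω, (∫ ℓ in Set.Ioi (0 : ℝ),
        (Set.Icc 0 (L ω)).indicator
          (fun ℓ' => f ℓ' ω / (μ {ω' | ℓ' ≤ L ω'}).toReal) ℓ) ∂μ
      = ∫ ℓ in Set.Ioi (0 : ℝ), ∫ ω, f ℓ ω ∂μ := by
  classical
  set ν : Measure ℝ := volume.restrict (Set.Ioi (0 : ℝ)) with hν
  set m : ℝ → ℝ≥0∞ := fun ℓ => μ {ω | ℓ ≤ L ω} with hm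
  set c : ℝ → ℝ := fun ℓ => (m ℓ).toReal with hc
  -- basic facts about m and c
  have hmset : ∀ ℓ : ℝ, MeasurableSet {ω | ℓ ≤ L ω} := fun ℓ =>
    hLm measurableSet_Ici
  have hm_ne_top : ∀ ℓ : ℝ, m ℓ ≠ ⊤ := fun ℓ => measure_ne_top μ _
  have hm_anti : Antitone m := fun a b hab =>
    measure_mono (fun ω (h : b ≤ L ω) => hab.trans h)
  have hmm : Measurable m := hm_anti.measurable
  have hcm : Measurable c := hmm.ennreal_toReal
  have hcpos : ∀ ℓ : ℝ, 0 ≤ ℓ → 0 < c ℓ := fun ℓ hℓ =>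
    ENNReal.toReal_pos (hpos ℓ hℓ).ne' (hm_ne_top ℓ)
  -- measurability of f ℓ
  have hmf : ∀ ℓ : ℝ, Measurable (f ℓ) := fun ℓ =>
    hjm.comp (measurable_prodMk_left)
  -- independence of f ℓ and L
  have hind : ∀ ℓ : ℝ, IndepFun (f ℓ) L μ := fun ℓ =>
    hindep.comp (measurable_pi_apply ℓ) measurable_id
  -- the integrand as a function on the product space
  set F : Ω → ℝ → ℝ := fun ω ℓ =>
    (Set.Icc 0 (L ω)).indicator (fun ℓ' => f ℓ' ω / c ℓ') ℓ with hF
  have hFmeas : Measurable (Function.uncurry F) := by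
    have : Function.uncurry F = fun p : Ω × ℝ =>
        Set.indicator {q : Ω × ℝ | 0 ≤ q.2 ∧ q.2 ≤ L q.1}
          (fun q => f q.2 q.1 / c q.2) p := by
      funext p
      simp only [Function.uncurry, hF, Set.indicator, Set.mem_Icc, Set.mem_setOf_eq]
    rw [this]
    refine Measurable.indicator ?_ ?_
    · exact (hjm.comp (measurable_snd.prodMk measurable_fst)).div
        (hcm.comp measurable_snd)
    · exact (measurableSet_le measurable_const measurable_snd).inter
        (measurableSet_le measurable_snd (hLm.comp measurable_fst))
  -- norm of F for ℓ > 0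
  have hFnorm : ∀ ℓ : ℝ, 0 < ℓ → ∀ ω,
      (‖F ω ℓ‖₊ : ℝ≥0∞)
        = ((fun ω => (‖f ℓ ω‖₊ : ℝ≥0∞)) * fun ω =>
            Set.indicator (Set.Ici ℓ) (1 : ℝ → ℝ≥0∞) (L ω)) ω * (m ℓ)⁻¹ := by
    intro ℓ hℓ ω
    by_cases h : ℓ ≤ L ω
    · have hmem : ℓ ∈ Set.Icc 0 (L ω) := ⟨hℓ.le, h⟩
      have hcne : c ℓ ≠ 0 := (hcpos ℓ hℓ.le).ne'
      simp only [hF, Set.indicator_of_mem hmem, Pi.mul_apply,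
        Set.indicator_of_mem (Set.mem_Ici.2 h), Pi.one_apply, mul_one]
      rw [div_eq_mul_inv, nnnorm_mul, nnnorm_inv, ENNReal.coe_mul,
        ENNReal.coe_inv (by simpa using hcne),
        ← enorm_eq_nnnorm (c ℓ), Real.enorm_eq_ofReal (hcpos ℓ hℓ.le).le, hc,
        ENNReal.ofReal_toReal (hm_ne_top ℓ)]
    · have hnmem : ℓ ∉ Set.Icc 0 (L ω) := fun hx => h hx.2
      simp [hF, Set.indicator_of_notMem hnmem,
        Set.indicator_of_notMem (fun hx => h (Set.mem_Ici.1 hx))]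
  -- integrability on the product space
  have hFint : Integrable (Function.uncurry F) (μ.prod ν) := by
    refine ⟨hFmeas.aestronglyMeasurable, ?_⟩
    rw [hasFiniteIntegral_def]
    rw [lintegral_prod_symm _ hFmeas.enorm.aemeasurable]
    calc ∫⁻ ℓ, ∫⁻ ω, (‖F ω ℓ‖₊ : ℝ≥0∞) ∂μ ∂ν
        ≤ ∫⁻ ℓ, ∫⁻ ω, (‖f ℓ ω‖₊ : ℝ≥0∞) ∂μ ∂ν := by
          rw [hν]
          refine setLIntegral_mono' measurableSet_Ioi (fun ℓ hℓ => ?_)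
          have hℓ' : 0 < ℓ := hℓ
          calc ∫⁻ ω, (‖F ω ℓ‖₊ : ℝ≥0∞) ∂μ
              = (∫⁻ ω, ((fun ω => (‖f ℓ ω‖₊ : ℝ≥0∞)) * fun ω =>
                  Set.indicator (Set.Ici ℓ) (1 : ℝ → ℝ≥0∞) (L ω)) ω ∂μ) * (m ℓ)⁻¹ := by
                rw [← lintegral_mul_const' _ _ (ENNReal.inv_ne_top.2 (hpos ℓ hℓ'.le).ne')]
                exact lintegral_congr (fun ω => hFnorm ℓ hℓ' ω)
            _ = ((∫⁻ ω, (‖f ℓ ω‖₊ : ℝ≥0∞) ∂μ) * m ℓ) * (m ℓ)⁻¹ := by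
                congr 1
                have hY : Measurable
                    (fun ω => Set.indicator (Set.Ici ℓ) (1 : ℝ → ℝ≥0∞) (L ω)) :=
                  (measurable_one.indicator measurableSet_Ici).comp hLm
                have hXY : IndepFun (fun ω => (‖f ℓ ω‖₊ : ℝ≥0∞))
                    (fun ω => Set.indicator (Set.Ici ℓ) (1 : ℝ → ℝ≥0∞) (L ω)) μ :=
                  (hind ℓ).comp measurable_nnnorm.coe_nnreal_ennreal
                    (measurable_one.indicator measurableSet_Ici)
                rw [lintegral_mul_eq_lintegral_mul_lintegral_of_indepFun
                  ((hmf ℓ).nnnorm.coe_nnreal_ennreal) hY hXY]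
                congr 1
                have : (fun ω => Set.indicator (Set.Ici ℓ) (1 : ℝ → ℝ≥0∞) (L ω))
                    = fun ω => Set.indicator {ω | ℓ ≤ L ω} (1 : Ω → ℝ≥0∞) ω := by
                  funext ω
                  by_cases h : ℓ ≤ L ω <;> simp [h]
                rw [this, lintegral_indicator_one (hmset ℓ)]
            _ ≤ (∫⁻ ω, (‖f ℓ ω‖₊ : ℝ≥0∞) ∂μ) * 1 := by
                rw [mul_assoc]
                exact mul_le_mul_right (ENNReal.mul_inv_le_one _) _
            _ = ∫⁻ ω, (‖f ℓ ω‖₊ : ℝ≥0∞) ∂μ := mul_one _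
      _ < ⊤ := hint
  -- swap the order of integration
  rw [show (∫ ω, (∫ ℓ in Set.Ioi (0 : ℝ),
        (Set.Icc 0 (L ω)).indicator
          (fun ℓ' => f ℓ' ω / (μ {ω' | ℓ' ≤ L ω'}).toReal) ℓ) ∂μ)
      = ∫ ω, ∫ ℓ, F ω ℓ ∂ν ∂μ from rfl,
    integral_integral_swap hFint]
  -- a.e. integrability of f ℓ
  have hmeas_lint : Measurable (fun ℓ => ∫⁻ ω, (‖f ℓ ω‖₊ : ℝ≥0∞) ∂μ) := by
    have : Measurable (Function.uncurry fun ℓ ω => (‖f ℓ ω‖₊ : ℝ≥0∞)) :=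
      hjm.nnnorm.coe_nnreal_ennreal
    exact Measurable.lintegral_prod_right this
  have hae_fin : ∀ᵐ ℓ ∂ν, (∫⁻ ω, (‖f ℓ ω‖₊ : ℝ≥0∞) ∂μ) < ⊤ :=
    ae_lt_top hmeas_lint hint.ne
  refine integral_congr_ae ?_
  filter_upwards [hae_fin, ae_restrict_mem measurableSet_Ioi] with ℓ hfin hℓ
  have hℓ' : (0 : ℝ) < ℓ := hℓ
  have hfint : Integrable (f ℓ) μ :=
    ⟨(hmf ℓ).aestronglyMeasurable, (hasFiniteIntegral_def _ _).2 hfin⟩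
  -- rewrite the inner integrand
  have hEq : (fun ω => F ω ℓ)
      = fun ω => (f ℓ ω * Set.indicator (Set.Ici ℓ) (1 : ℝ → ℝ) (L ω)) / c ℓ := by
    funext ω
    by_cases h : ℓ ≤ L ω
    · show (Set.Icc 0 (L ω)).indicator (fun ℓ' => f ℓ' ω / c ℓ') ℓ = _
      rw [Set.indicator_of_mem (Set.mem_Icc.2 ⟨hℓ'.le, h⟩),
        Set.indicator_of_mem (Set.mem_Ici.2 h), Pi.one_apply, mul_one]
    · have h1 : ℓ ∉ Set.Icc 0 (L ω) := fun hx => h hx.2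
      have h2 : L ω ∉ Set.Ici ℓ := fun hx => h hx
      show (Set.Icc 0 (L ω)).indicator (fun ℓ' => f ℓ' ω / c ℓ') ℓ = _
      rw [Set.indicator_of_notMem h1, Set.indicator_of_notMem h2, mul_zero,
        zero_div]
  rw [hEq, integral_div]
  have hind' : IndepFun (f ℓ) (fun ω => Set.indicator (Set.Ici ℓ) (1 : ℝ → ℝ) (L ω)) μ :=
    (hind ℓ).comp measurable_id (measurable_one.indicator measurableSet_Ici)
  have hind_int : ∫ ω, Set.indicator (Set.Ici ℓ) (1 : ℝ → ℝ) (L ω) ∂μ = c ℓ := by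
    have : (fun ω => Set.indicator (Set.Ici ℓ) (1 : ℝ → ℝ) (L ω))
        = fun ω => Set.indicator {ω | ℓ ≤ L ω} (1 : Ω → ℝ) ω := by
      funext ω
      by_cases h : ℓ ≤ L ω <;> simp [h]
    rw [this, integral_indicator_one (hmset ℓ)]
    rfl
  have hmul : ∫ a, f ℓ a * Set.indicator (Set.Ici ℓ) (1 : ℝ → ℝ) (L a) ∂μ
      = (∫ ω, f ℓ ω ∂μ) * c ℓ := by
    rw [← hind_int]
    exact hind'.integral_fun_mul_eq_mul_integral (hmf ℓ).aestronglyMeasurable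
      (((measurable_one.indicator measurableSet_Ici).comp hLm).aestronglyMeasurable)
  rw [hmul, mul_div_assoc, div_self (hcpos ℓ hℓ'.le).ne', mul_one]
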